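/- Let Φ be an entire function such that {Φ^n}_{n≥0} is orthogonal in H_E(ξ), and p ≥ 1 an integer. The operator C_Φ D^p (f ↦ f^{(p)} ∘ Φ) is bounded on H_E(ξ) if and only if there exists M > 0 with ‖Φ^{n−p}‖ ≤ M ξ_n / (n(n−1)⋯(n−p+1)) for all n ≥ p. -/

import Mathlib

noncomputable section

open Filter

/-- `n`-th Taylor coefficient of `f` at `0`. -/
def heCoeff (f : ℂ → ℂ) (n : ℕ) : ℂ := iteratedDeriv n f 0 / (n.factorial : ℂ)

/-- Membership in the weighted Hardy space of entire functions `H_E(ξ)`. -/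
def MemHE (ξ : ℕ → ℝ) (f : ℂ → ℂ) : Prop :=
  Differentiable ℂ f ∧ Summable (fun n => ‖heCoeff f n‖ ^ 2 * (ξ n) ^ 2)

/-- Squared norm in `H_E(ξ)`. -/
def heNormSq (ξ : ℕ → ℝ) (f : ℂ → ℂ) : ℝ := ∑' n, ‖heCoeff f n‖ ^ 2 * (ξ n) ^ 2

/-- Inner product in `H_E(ξ)`. -/
def heInner (ξ : ℕ → ℝ) (f g : ℂ → ℂ) : ℂ :=
  ∑' n, heCoeff f n * (starRingEnd ℂ) (heCoeff g n) * ((ξ n : ℂ)) ^ 2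

/-- `ξ` is an admissible weight sequence: positive with `ξ n ^ (1/n) → ∞`. -/
def HEWeight (ξ : ℕ → ℝ) : Prop :=
  (∀ n, 0 < ξ n) ∧ Tendsto (fun n : ℕ => (ξ n) ^ ((1 : ℝ) / n)) atTop atTop

/-- An operator on functions is an isometry of `H_E(ξ)`. -/
def IsIsometryHE (ξ : ℕ → ℝ) (T : (ℂ → ℂ) → (ℂ → ℂ)) : Prop :=
  (∀ f, MemHE ξ f → MemHE ξ (T f)) ∧ ∀ f, MemHE ξ f → heNormSq ξ (T f) = heNormSq ξ f

/-- Unitary: an isometry of `H_E(ξ)` mapping `H_E(ξ)` onto itself. -/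
def IsUnitaryHE (ξ : ℕ → ℝ) (T : (ℂ → ℂ) → (ℂ → ℂ)) : Prop :=
  IsIsometryHE ξ T ∧ ∀ g, MemHE ξ g → ∃ f, MemHE ξ f ∧ T f = g

/-- Composition operator `C_Φ f = f ∘ Φ`. -/
def compOp (Φ : ℂ → ℂ) : (ℂ → ℂ) → (ℂ → ℂ) := fun f => f ∘ Φ

/-- Weighted composition operator `C_{Υ,Φ} f = Υ · (f ∘ Φ)`. -/
def wCompOp (Υ Φ : ℂ → ℂ) : (ℂ → ℂ) → (ℂ → ℂ) := fun f z => Υ z * f (Φ z)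

/-- Reproducing kernel `K_p(z) = ∑ conj(p)^n z^n / ξ_n²`. -/
def heKernel (ξ : ℕ → ℝ) (p : ℂ) : ℂ → ℂ :=
  fun z => ∑' n, (starRingEnd ℂ p) ^ n * z ^ n / ((ξ n : ℂ)) ^ 2

/-- Boundedness of an operator on `H_E(ξ)`. -/
def IsBoundedHE (ξ : ℕ → ℝ) (T : (ℂ → ℂ) → (ℂ → ℂ)) : Prop :=
  ∃ M > (0 : ℝ), ∀ f, MemHE ξ f → MemHE ξ (T f) ∧
    Real.sqrt (heNormSq ξ (T f)) ≤ M * Real.sqrt (heNormSq ξ f)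

/-- Generalized weighted composition operator `D^p_{Φ,Υ} f = Υ · (f^{(p)} ∘ Φ)`. -/
def genWComp (p : ℕ) (Φ Υ : ℂ → ℂ) : (ℂ → ℂ) → (ℂ → ℂ) :=
  fun f z => Υ z * iteratedDeriv p f (Φ z)

/-! ### Auxiliary lemmas -/

open scoped ENNReal

local notation "⟪" x ", " y "⟫" => @inner ℂ _ _ x y

lemma hasSum_heCoeff {f : ℂ → ℂ} (hf : Differentiable ℂ f) (z : ℂ) :
    HasSum (fun n => heCoeff f n * z ^ n) (f z) := by
  have h := Complex.hasSum_taylorSeries_of_entire hf 0 z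
  refine h.congr_fun fun n => ?_
  simp only [heCoeff, sub_zero, smul_eq_mul]
  ring

lemma diff_iteratedDeriv {f : ℂ → ℂ} (hf : Differentiable ℂ f) (p : ℕ) :
    Differentiable ℂ (iteratedDeriv p f) := by
  rw [iteratedDeriv_eq_iterate]
  have hc : ContDiff ℂ (⊤ : ℕ∞) f := hf.contDiff
  exact (ContDiff.iterate_deriv p hc).differentiable (by simp)

lemma iteratedDeriv_iteratedDeriv' (f : ℂ → ℂ) (n q : ℕ) :
    iteratedDeriv n (iteratedDeriv q f) = iteratedDeriv (n + q) f := by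
  induction n with
  | zero => simp
  | succ n ih =>
    rw [iteratedDeriv_succ, ih]
    rw [show n + 1 + q = (n + q) + 1 by ring, iteratedDeriv_succ]

lemma descFactorial_cast_fact (q k : ℕ) :
    (k.factorial : ℂ) * ((k + q).descFactorial q : ℂ) = ((k + q).factorial : ℂ) := by
  have := Nat.factorial_mul_descFactorial (n := k + q) (k := q) (Nat.le_add_left q k)
  simp only [Nat.add_sub_cancel] at this
  exact_mod_cast this

lemma heCoeff_iteratedDeriv (f : ℂ → ℂ) (q k : ℕ) :
    heCoeff (iteratedDeriv q f) k = heCoeff f (k + q) * ((k + q).descFactorial q : ℂ) := by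
  simp only [heCoeff, iteratedDeriv_iteratedDeriv']
  rw [div_mul_eq_mul_div, div_eq_div_iff]
  · rw [mul_assoc, mul_comm ((k + q).descFactorial q : ℂ), descFactorial_cast_fact q k]
  · exact_mod_cast Nat.factorial_ne_zero k
  · exact_mod_cast Nat.factorial_ne_zero (k + q)

lemma iteratedDeriv_cmul {f : ℂ → ℂ} (hf : Differentiable ℂ f) (c : ℂ) (n : ℕ) (x : ℂ) :
    iteratedDeriv n (fun z => c * f z) x = c * iteratedDeriv n f x := by
  rw [← iteratedDerivWithin_univ, ← iteratedDerivWithin_univ]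
  exact iteratedDerivWithin_const_mul (Set.mem_univ x) uniqueDiffOn_univ c
    (hf.contDiff.contDiffWithinAt)

lemma heWeight_summable {ξ : ℕ → ℝ} (hξ : HEWeight ξ) {r : ℝ} (hr : 0 ≤ r) :
    Summable (fun n => r ^ n / ξ n ^ 2) := by
  obtain ⟨hpos, htend⟩ := hξ
  set b : ℝ := max 1 (Real.sqrt (2 * r)) with hb
  have hb1 : (1 : ℝ) ≤ b := le_max_left _ _
  have hbs : Real.sqrt (2 * r) ≤ b := le_max_right _ _
  obtain ⟨N', hN'⟩ := (htend.eventually_ge_atTop b).exists_forall_of_atTop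
  set N := max N' 1 with hN
  have key : ∀ n, N ≤ n → r ^ n / ξ n ^ 2 ≤ (1 / 2) ^ n := by
    intro n hn
    have hn1 : 1 ≤ n := le_trans (le_max_right _ _) hn
    have hξn : b ^ n ≤ ξ n := by
      have h1 : b ≤ ξ n ^ ((1 : ℝ) / n) := hN' n (le_trans (le_max_left _ _) hn)
      have h2 : (ξ n ^ ((1 : ℝ) / n)) ^ n = ξ n := by
        rw [← Real.rpow_natCast (ξ n ^ ((1 : ℝ) / n)) n, ← Real.rpow_mul (hpos n).le]
        rw [one_div, inv_mul_cancel₀ (by exact_mod_cast Nat.one_le_iff_ne_zero.mp hn1)]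
        exact Real.rpow_one _
      calc b ^ n ≤ (ξ n ^ ((1 : ℝ) / n)) ^ n := by
            refine pow_le_pow_left₀ (by linarith) h1 n
        _ = ξ n := h2
    have h2r : 2 * r ≤ b ^ 2 := by
      have := Real.sq_sqrt (by linarith : (0:ℝ) ≤ 2 * r)
      nlinarith [Real.sqrt_nonneg (2 * r)]
    have hξsq : (2 * r) ^ n ≤ ξ n ^ 2 := by
      calc (2 * r) ^ n ≤ (b ^ 2) ^ n := pow_le_pow_left₀ (by linarith) h2r n
        _ = (b ^ n) ^ 2 := by ring
        _ ≤ ξ n ^ 2 := by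
            have hbn : 0 ≤ b ^ n := pow_nonneg (by linarith) n
            nlinarith
    rcases eq_or_lt_of_le hr with h0 | hrpos
    · rw [← h0]
      simp only [zero_pow (by omega : n ≠ 0), zero_div]
      positivity
    · rw [div_le_iff₀ (pow_pos (hpos n) 2)]
      have : (1 / 2 : ℝ) ^ n * (2 * r) ^ n = r ^ n := by
        rw [← mul_pow]; ring_nf
      calc r ^ n = (1 / 2 : ℝ) ^ n * (2 * r) ^ n := this.symm
        _ ≤ (1 / 2 : ℝ) ^ n * ξ n ^ 2 := by
            refine mul_le_mul_of_nonneg_left hξsq (by positivity)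
  have hgeo : Summable (fun n : ℕ => (1 / 2 : ℝ) ^ n) :=
    summable_geometric_of_lt_one (by norm_num) (by norm_num)
  have htail : Summable (fun n => r ^ (n + N) / ξ (n + N) ^ 2) := by
    refine Summable.of_nonneg_of_le
      (fun n => div_nonneg (pow_nonneg hr _) (sq_nonneg _))
      (fun n => key (n + N) (by omega)) ?_
    exact (summable_nat_add_iff N).mpr hgeo
  exact (summable_nat_add_iff N).mp htail

lemma exists_entire {ξ : ℕ → ℝ} (hξ : HEWeight ξ) (c : ℕ → ℂ)
    (hc : Summable fun n => ‖c n‖ ^ 2 * ξ n ^ 2) :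
    ∃ h : ℂ → ℂ, Differentiable ℂ h ∧ (∀ n, heCoeff h n = c n) ∧
      ∀ z, HasSum (fun n => c n * z ^ n) (h z) := by
  set P := FormalMultilinearSeries.ofScalars ℂ c with hP
  have hnorm : ∀ n, ‖P n‖ = ‖c n‖ := fun n => FormalMultilinearSeries.ofScalars_norm ..
  have hrad : P.radius = ⊤ := by
    refine P.radius_eq_top_of_summable_norm fun r => ?_
    have h1 : Summable (fun n => (((r : ℝ)) ^ 2) ^ n / ξ n ^ 2) :=
      heWeight_summable hξ (sq_nonneg _)
    refine Summable.of_nonneg_of_le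
      (fun n => mul_nonneg (norm_nonneg _) (pow_nonneg r.coe_nonneg n)) ?_
      ((hc.add h1).div_const 2)
    intro n
    rw [hnorm]
    have hξn := hξ.1 n
    have hab : ‖c n‖ * (r : ℝ) ^ n = (‖c n‖ * ξ n) * ((r : ℝ) ^ n / ξ n) := by
      field_simp
    have h2 := two_mul_le_add_sq (‖c n‖ * ξ n) ((r : ℝ) ^ n / ξ n)
    have ha : (‖c n‖ * ξ n) ^ 2 = ‖c n‖ ^ 2 * ξ n ^ 2 := by ring
    have hb : ((r : ℝ) ^ n / ξ n) ^ 2 = (((r : ℝ)) ^ 2) ^ n / ξ n ^ 2 := by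
      rw [div_pow, ← pow_mul, ← pow_mul, Nat.mul_comm]
    rw [hab]
    rw [ha, hb] at h2
    linarith
  have hmem : ∀ z : ℂ, z ∈ EMetric.ball (0 : ℂ) P.radius := by
    intro z; rw [hrad]; exact EMetric.mem_ball.mpr (edist_lt_top z 0)
  have hball := P.hasFPowerSeriesOnBall (by rw [hrad]; exact ENNReal.zero_lt_top)
  refine ⟨P.sum, ?_, ?_, ?_⟩
  · intro z
    exact (hball.differentiableOn z (hmem z)).differentiableAt
      (EMetric.isOpen_ball.mem_nhds (hmem z))
  · intro n
    have h1 := hball.factorial_smul (y := (1 : ℂ)) n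
    have h2 : iteratedDeriv n P.sum 0 = (n.factorial : ℂ) * c n := by
      rw [iteratedDeriv_eq_iteratedFDeriv, ← h1]
      rw [FormalMultilinearSeries.ofScalars_apply_eq]
      norm_num [smul_eq_mul]
    rw [heCoeff, h2, mul_comm, mul_div_assoc,
      div_self (by exact_mod_cast Nat.factorial_ne_zero n), mul_one]
  · intro z
    have h := hball.hasSum (hmem z)
    rw [zero_add] at h
    refine h.congr_fun fun n => ?_
    rw [FormalMultilinearSeries.ofScalars_apply_eq, smul_eq_mul]

lemma orth_hasSum {E : Type*} [NormedAddCommGroup E] [InnerProductSpace ℂ E]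
    [CompleteSpace E] (u : ℕ → E) (hor : ∀ i j, i ≠ j → ⟪u i, u j⟫ = 0)
    (hsq : Summable fun i => ‖u i‖ ^ 2) :
    ∃ S, HasSum u S ∧ ‖S‖ ^ 2 = ∑' i, ‖u i‖ ^ 2 := by
  have hfam : OrthogonalFamily ℂ (fun i => ↥(ℂ ∙ u i)) (fun i => (ℂ ∙ u i).subtypeₗᵢ) := by
    intro i j hij v w
    obtain ⟨a, ha⟩ := Submodule.mem_span_singleton.1 v.2
    obtain ⟨b, hb⟩ := Submodule.mem_span_singleton.1 w.2
    show ⟪(v : E), (w : E)⟫ = 0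
    rw [← ha, ← hb, inner_smul_left, inner_smul_right, hor i j hij, mul_zero, mul_zero]
  have hsum : Summable u := by
    have := (hfam.summable_iff_norm_sq_summable
      (fun i => ⟨u i, Submodule.mem_span_singleton_self _⟩)).2 (by simpa using hsq)
    simpa using this
  obtain ⟨S, hS⟩ := hsum
  refine ⟨S, hS, ?_⟩
  have h1 : HasSum (fun i => ⟪S, u i⟫) ⟪S, S⟫ := (innerSL ℂ S).hasSum hS
  have h2 : ∀ i, ⟪S, u i⟫ = ((‖u i‖ ^ 2 : ℝ) : ℂ) := by
    intro i
    have h3 : HasSum (fun j => ⟪u i, u j⟫) ⟪u i, S⟫ := (innerSL ℂ (u i)).hasSum hS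
    have h4' : ⟪u i, S⟫ = ⟪u i, u i⟫ := by
      have := h3.tsum_eq
      rw [← this, tsum_eq_single i (fun j hj => hor i j (Ne.symm hj))]
    rw [← inner_conj_symm, h4', inner_conj_symm, inner_self_eq_norm_sq_to_K]
    norm_num
  have h5 : HasSum (fun i => ((‖u i‖ ^ 2 : ℝ) : ℂ)) ⟪S, S⟫ :=
    h1.congr_fun fun i => (h2 i).symm
  have h6 : HasSum (fun i => ((‖u i‖ ^ 2 : ℝ) : ℂ)) ((∑' i, ‖u i‖ ^ 2 : ℝ) : ℂ) :=
    Complex.ofRealCLM.hasSum hsq.hasSum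
  have h7 : ⟪S, S⟫ = ((∑' i, ‖u i‖ ^ 2 : ℝ) : ℂ) := h5.unique h6
  have h8 : ‖S‖ ^ 2 = RCLike.re ⟪S, S⟫ := (inner_self_eq_norm_sq (𝕜 := ℂ) S).symm
  rw [h8, h7]
  simp

abbrev ELP := lp (fun _ : ℕ => ℂ) 2

lemma rpow_two_toReal (x : ℝ) : x ^ (2 : ℝ≥0∞).toReal = x ^ 2 := by
  rw [show (2 : ℝ≥0∞).toReal = ((2 : ℕ) : ℝ) by norm_num, Real.rpow_natCast]

lemma memℓp_two_iff {g : ℕ → ℂ} : Memℓp g 2 ↔ Summable (fun n => ‖g n‖ ^ 2) := by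
  rw [memℓp_gen_iff (by norm_num : (0 : ℝ) < (2 : ℝ≥0∞).toReal)]
  exact summable_congr fun n => by rw [rpow_two_toReal]

lemma lp_norm_sq (x : ELP) : ‖x‖ ^ 2 = ∑' i, ‖x i‖ ^ 2 := by
  have h8 : ‖x‖ ^ 2 = RCLike.re ⟪x, x⟫ := (inner_self_eq_norm_sq (𝕜 := ℂ) x).symm
  have h1 : HasSum (fun i => ⟪x i, x i⟫) ⟪x, x⟫ := lp.hasSum_inner x x
  have h2 : HasSum (fun i => RCLike.re ⟪x i, x i⟫) (RCLike.re ⟪x, x⟫) :=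
    RCLike.reCLM.hasSum h1
  have h3 : ∀ i : ℕ, RCLike.re ⟪x i, x i⟫ = ‖x i‖ ^ 2 := fun i =>
    inner_self_eq_norm_sq (𝕜 := ℂ) (x i)
  rw [h8, ← (h2.congr_fun fun i => (h3 i).symm).tsum_eq]

lemma norm_mul_ofReal_sq (a : ℂ) {t : ℝ} (ht : 0 < t) :
    ‖a * (t : ℂ)‖ ^ 2 = ‖a‖ ^ 2 * t ^ 2 := by
  rw [norm_mul, Complex.norm_real, Real.norm_eq_abs, abs_of_pos ht, mul_pow]

theorem stmt19 (ξ : ℕ → ℝ) (hξ : HEWeight ξ) (Φ : ℂ → ℂ)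
    (hΦ : Differentiable ℂ Φ) (p : ℕ) (hp : 1 ≤ p)
    (horth : ∀ m n : ℕ, m ≠ n →
      heInner ξ (fun z => Φ z ^ m) (fun z => Φ z ^ n) = 0) :
    IsBoundedHE ξ (genWComp p Φ (fun _ => 1)) ↔
    ∃ M > (0 : ℝ), ∀ n, p ≤ n →
      MemHE ξ (fun z => Φ z ^ (n - p)) ∧
      Real.sqrt (heNormSq ξ (fun z => Φ z ^ (n - p))) ≤
        M * ξ n / (n.descFactorial p : ℝ) := by
  have hpos : ∀ n, 0 < ξ n := hξ.1
  constructor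
  · rintro ⟨M, hM, hbd⟩
    refine ⟨M, hM, fun n hn => ?_⟩
    -- the monomial z ^ n
    set c : ℕ → ℂ := fun j => if j = n then 1 else 0 with hcdef
    have hcsum : Summable (fun j => ‖c j‖ ^ 2 * ξ j ^ 2) := by
      refine summable_of_ne_finset_zero (s := {n}) fun j hj => ?_
      have hj' : j ≠ n := by simpa using hj
      simp [hcdef, hj']
    obtain ⟨h, hdiff, hcoeff, hsum⟩ := exists_entire hξ c hcsum
    have hmono : h = fun z => z ^ n := by
      funext z
      refine (hsum z).unique ?_
      refine (hasSum_ite_eq n (z ^ n)).congr_fun fun j => ?_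
      by_cases hj : j = n <;> simp [hcdef, hj]
    have hcoeffm : ∀ j, heCoeff (fun z : ℂ => z ^ n) j = c j := by
      rw [← hmono]; exact hcoeff
    have hmem : MemHE ξ (fun z : ℂ => z ^ n) := by
      refine ⟨differentiable_pow n, ?_⟩
      exact hcsum.congr fun j => by rw [hcoeffm j]
    obtain ⟨hmemT, hbdT⟩ := hbd _ hmem
    have hnormm : heNormSq ξ (fun z : ℂ => z ^ n) = ξ n ^ 2 := by
      rw [heNormSq, tsum_eq_single n (fun j hj => by simp [hcoeffm j, hcdef, hj])]
      simp [hcoeffm n, hcdef]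
    set d : ℕ := n.descFactorial p with hddef
    have hdne : d ≠ 0 := by
      intro h0
      exact absurd (Nat.descFactorial_eq_zero_iff_lt.1 h0) (not_lt.2 hn)
    have hdpos : (0 : ℝ) < (d : ℝ) := by exact_mod_cast Nat.pos_of_ne_zero hdne
    set q : ℂ → ℂ := fun z => Φ z ^ (n - p) with hqdef
    have hqdiff : Differentiable ℂ q := hΦ.pow (n - p)
    have hTeq : genWComp p Φ (fun _ => 1) (fun z => z ^ n) = fun z => (d : ℂ) * q z := by
      funext z
      simp only [genWComp, one_mul]
      have hdm : Differentiable ℂ (iteratedDeriv p (fun z : ℂ => z ^ n)) :=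
        diff_iteratedDeriv (differentiable_pow n) p
      have hs := hasSum_heCoeff hdm (Φ z)
      have hterm : ∀ k, heCoeff (iteratedDeriv p (fun z : ℂ => z ^ n)) k * (Φ z) ^ k
          = if k = n - p then (d : ℂ) * Φ z ^ (n - p) else 0 := by
        intro k
        rw [heCoeff_iteratedDeriv, hcoeffm (k + p)]
        by_cases hk : k = n - p
        · subst hk
          rw [Nat.sub_add_cancel hn]
          simp [hcdef, hddef]
        · have hkp : k + p ≠ n := by omega
          simp [hcdef, hkp, hk]
      have hs2 : HasSum (fun k => if k = n - p then (d : ℂ) * Φ z ^ (n - p) else 0)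
          (iteratedDeriv p (fun z : ℂ => z ^ n) (Φ z)) :=
        hs.congr_fun fun k => (hterm k).symm
      have := hs2.unique (hasSum_ite_eq (n - p) ((d : ℂ) * Φ z ^ (n - p)))
      rw [this]
    rw [hTeq] at hmemT hbdT
    have hcq : ∀ j, heCoeff (fun z => (d : ℂ) * q z) j = (d : ℂ) * heCoeff q j := by
      intro j
      simp only [heCoeff, iteratedDeriv_cmul hqdiff]
      ring
    have hdnorm : ‖((d : ℕ) : ℂ)‖ = (d : ℝ) := by
      simp
    have hterm2 : ∀ j, ‖heCoeff (fun z => (d : ℂ) * q z) j‖ ^ 2 * ξ j ^ 2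
        = (d : ℝ) ^ 2 * (‖heCoeff q j‖ ^ 2 * ξ j ^ 2) := by
      intro j
      rw [hcq j, norm_mul, hdnorm]
      ring
    have hmemq : MemHE ξ q := by
      refine ⟨hqdiff, ?_⟩
      have hs := hmemT.2
      have hs2 : Summable (fun j => (d : ℝ) ^ 2 * (‖heCoeff q j‖ ^ 2 * ξ j ^ 2)) :=
        hs.congr hterm2
      have := hs2.mul_left ((d : ℝ) ^ 2)⁻¹
      refine this.congr fun j => ?_
      field_simp
    refine ⟨hmemq, ?_⟩
    have hnT : heNormSq ξ (fun z => (d : ℂ) * q z) = (d : ℝ) ^ 2 * heNormSq ξ q := by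
      rw [heNormSq, heNormSq, ← tsum_mul_left]
      exact tsum_congr hterm2
    rw [hnT, hnormm] at hbdT
    have h0q : 0 ≤ heNormSq ξ q := tsum_nonneg fun j => by positivity
    rw [Real.sqrt_mul (sq_nonneg _), Real.sqrt_sq hdpos.le, Real.sqrt_sq (hpos n).le] at hbdT
    rw [le_div_iff₀ hdpos]
    calc Real.sqrt (heNormSq ξ q) * (d : ℝ) = (d : ℝ) * Real.sqrt (heNormSq ξ q) := by ring
      _ ≤ M * ξ n := hbdT
  · rintro ⟨M, hM, hcond⟩
    refine ⟨M, hM, fun f hf => ?_⟩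
    obtain ⟨hfd, hfs⟩ := hf
    have hDp : Differentiable ℂ (iteratedDeriv p f) := diff_iteratedDeriv hfd p
    set w : ℕ → ℂ := fun k => heCoeff (iteratedDeriv p f) k with hwdef
    have hpow : ∀ k : ℕ, MemHE ξ (fun z => Φ z ^ k) := by
      intro k
      have := (hcond (k + p) (by omega)).1
      simpa using this
    have hΦk : ∀ k : ℕ, Differentiable ℂ (fun z => Φ z ^ k) := fun k => hΦ.pow k
    have hmemv : ∀ k, Memℓp (fun j => heCoeff (fun z => Φ z ^ k) j * ((ξ j : ℝ) : ℂ)) 2 := by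
      intro k
      refine memℓp_two_iff.2 ?_
      exact (hpow k).2.congr fun j => (norm_mul_ofReal_sq _ (hpos j)).symm
    set v : ℕ → ELP := fun k => ⟨_, hmemv k⟩ with hvdef
    have hvapp : ∀ k j, (v k) j = heCoeff (fun z => Φ z ^ k) j * ((ξ j : ℝ) : ℂ) :=
      fun k j => rfl
    have hnormv : ∀ k, ‖v k‖ ^ 2 = heNormSq ξ (fun z => Φ z ^ k) := by
      intro k
      rw [lp_norm_sq, heNormSq]
      exact tsum_congr fun j => by rw [hvapp k j, norm_mul_ofReal_sq _ (hpos j)]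
    set u : ℕ → ELP := fun k => w k • v k with hudef
    have horthu : ∀ i j, i ≠ j → ⟪u i, u j⟫ = 0 := by
      intro i j hij
      simp only [hudef, inner_smul_left, inner_smul_right]
      have hvij : ⟪v i, v j⟫ = 0 := by
        rw [lp.inner_eq_tsum, ← horth j i (Ne.symm hij), heInner]
        refine tsum_congr fun m => ?_
        rw [hvapp i m, hvapp j m]
        simp only [RCLike.inner_apply, starRingEnd_apply, star_mul']
        rw [← starRingEnd_apply, ← starRingEnd_apply, Complex.conj_ofReal]
        ring
      rw [hvij, mul_zero, mul_zero]
    have hwnorm : ∀ k, ‖w k‖ = ‖heCoeff f (k + p)‖ * (((k + p).descFactorial p : ℕ) : ℝ) := by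
      intro k
      rw [hwdef]
      simp only [heCoeff_iteratedDeriv f p k, norm_mul]
      congr 1
      simp
    have hbound : ∀ k, ‖u k‖ ^ 2 ≤ M ^ 2 * (‖heCoeff f (k + p)‖ ^ 2 * ξ (k + p) ^ 2) := by
      intro k
      set dk : ℝ := (((k + p).descFactorial p : ℕ) : ℝ) with hdkdef
      have hdkpos : (0 : ℝ) < dk := by
        have : (k + p).descFactorial p ≠ 0 := by
          intro h0
          have := Nat.descFactorial_eq_zero_iff_lt.1 h0
          omega
        rw [hdkdef]
        exact_mod_cast Nat.pos_of_ne_zero this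
      have h1 : Real.sqrt (heNormSq ξ (fun z => Φ z ^ k)) ≤ M * ξ (k + p) / dk := by
        have := (hcond (k + p) (by omega)).2
        simpa using this
      have h0 : 0 ≤ heNormSq ξ (fun z => Φ z ^ k) := tsum_nonneg fun j => by positivity
      have h2 : heNormSq ξ (fun z => Φ z ^ k) ≤ (M * ξ (k + p) / dk) ^ 2 := by
        nlinarith [Real.sq_sqrt h0, Real.sqrt_nonneg (heNormSq ξ (fun z => Φ z ^ k))]
      have h3 : ‖u k‖ ^ 2 = ‖w k‖ ^ 2 * ‖v k‖ ^ 2 := by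
        rw [hudef]
        simp only [norm_smul]
        ring
      rw [h3, hnormv k, hwnorm k]
      calc (‖heCoeff f (k + p)‖ * dk) ^ 2 * heNormSq ξ (fun z => Φ z ^ k)
          ≤ (‖heCoeff f (k + p)‖ * dk) ^ 2 * (M * ξ (k + p) / dk) ^ 2 :=
            mul_le_mul_of_nonneg_left h2 (sq_nonneg _)
        _ = M ^ 2 * (‖heCoeff f (k + p)‖ ^ 2 * ξ (k + p) ^ 2) := by
            field_simp
    have haddinj : Function.Injective (fun k : ℕ => k + p) := fun a b hab => by
      have : a + p = b + p := hab
      omega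
    have hshift : Summable (fun k => ‖heCoeff f (k + p)‖ ^ 2 * ξ (k + p) ^ 2) :=
      hfs.comp_injective haddinj
    have hgsum : Summable (fun k => M ^ 2 * (‖heCoeff f (k + p)‖ ^ 2 * ξ (k + p) ^ 2)) :=
      hshift.mul_left _
    have husq : Summable (fun k => ‖u k‖ ^ 2) :=
      Summable.of_nonneg_of_le (fun k => sq_nonneg _) hbound hgsum
    obtain ⟨S, hShasSum, hSnorm⟩ := orth_hasSum u horthu husq
    set c : ℕ → ℂ := fun j => S j / ((ξ j : ℝ) : ℂ) with hcdef
    have hξC : ∀ j, (((ξ j : ℝ)) : ℂ) ≠ 0 := fun j => by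
      exact_mod_cast (hpos j).ne'
    have hcS : ∀ j, ‖c j‖ ^ 2 * ξ j ^ 2 = ‖S j‖ ^ 2 := by
      intro j
      rw [hcdef]
      simp only [norm_div, Complex.norm_real, Real.norm_eq_abs, abs_of_pos (hpos j)]
      rw [div_pow, div_mul_cancel₀ _ (pow_ne_zero 2 (hpos j).ne')]
    have hS2 : Summable (fun j => ‖S j‖ ^ 2) := memℓp_two_iff.1 (lp.memℓp S)
    have hcsum : Summable (fun j => ‖c j‖ ^ 2 * ξ j ^ 2) :=
      hS2.congr fun j => (hcS j).symm
    obtain ⟨h, hhdiff, hhcoeff, hhsum⟩ := exists_entire hξ c hcsum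
    have hevmem : ∀ z : ℂ, Memℓp (fun j => (starRingEnd ℂ) z ^ j / ((ξ j : ℝ) : ℂ)) 2 := by
      intro z
      refine memℓp_two_iff.2 ?_
      have hws := heWeight_summable hξ (r := ‖z‖ ^ 2) (by positivity)
      refine hws.congr fun j => ?_
      symm
      rw [norm_div, norm_pow, RCLike.norm_conj, Complex.norm_real, Real.norm_eq_abs,
        abs_of_pos (hpos j), div_pow, ← pow_mul, ← pow_mul, Nat.mul_comm]
    set e : ℂ → ELP := fun z => ⟨_, hevmem z⟩ with hedef
    have heapp : ∀ (z : ℂ) (j : ℕ), (e z) j = (starRingEnd ℂ) z ^ j / ((ξ j : ℝ) : ℂ) :=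
      fun z j => rfl
    have hinner_e : ∀ (z : ℂ) (k : ℕ), ⟪e z, v k⟫ = Φ z ^ k := by
      intro z k
      rw [lp.inner_eq_tsum, ← (hasSum_heCoeff (hΦk k) z).tsum_eq]
      refine tsum_congr fun j => ?_
      rw [heapp z j, hvapp k j]
      simp only [RCLike.inner_apply, map_div₀, map_pow, Complex.conj_conj, Complex.conj_ofReal]
      field_simp [hξC j]
    have hpt : ∀ z, h z = iteratedDeriv p f (Φ z) := by
      intro z
      have hg : HasSum (fun k => w k * Φ z ^ k) (iteratedDeriv p f (Φ z)) :=
        hasSum_heCoeff hDp (Φ z)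
      have h1 : HasSum (fun k => ⟪e z, u k⟫) ⟪e z, S⟫ := (innerSL ℂ (e z)).hasSum hShasSum
      have h2 : ∀ k, ⟪e z, u k⟫ = w k * Φ z ^ k := by
        intro k
        rw [hudef]
        simp only [inner_smul_right]
        rw [hinner_e z k]
      have h3 : ⟪e z, S⟫ = iteratedDeriv p f (Φ z) :=
        (h1.congr_fun fun k => (h2 k).symm).unique hg
      have h4 : ⟪e z, S⟫ = h z := by
        rw [lp.inner_eq_tsum, ← (hhsum z).tsum_eq]
        refine tsum_congr fun j => ?_
        rw [heapp z j]
        simp only [RCLike.inner_apply, map_div₀, map_pow, Complex.conj_conj,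
          Complex.conj_ofReal, hcdef]
        field_simp [hξC j]
      rw [← h4, h3]
    have hTf : genWComp p Φ (fun _ => 1) f = h := by
      funext z
      simp only [genWComp, one_mul]
      exact (hpt z).symm
    rw [hTf]
    have hcoeffsum : Summable (fun j => ‖heCoeff h j‖ ^ 2 * ξ j ^ 2) :=
      hcsum.congr fun j => by rw [hhcoeff j]
    refine ⟨⟨hhdiff, hcoeffsum⟩, ?_⟩
    have hnormh : heNormSq ξ h = ‖S‖ ^ 2 := by
      rw [heNormSq, lp_norm_sq]
      refine tsum_congr fun j => ?_
      rw [hhcoeff j, hcS j]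
    have hfnormsq : heNormSq ξ h ≤ M ^ 2 * heNormSq ξ f := by
      rw [hnormh, hSnorm]
      have step1 : ∑' k, ‖u k‖ ^ 2
          ≤ ∑' k, M ^ 2 * (‖heCoeff f (k + p)‖ ^ 2 * ξ (k + p) ^ 2) :=
        Summable.tsum_le_tsum hbound husq hgsum
      have step2 : ∑' k, M ^ 2 * (‖heCoeff f (k + p)‖ ^ 2 * ξ (k + p) ^ 2)
          ≤ M ^ 2 * heNormSq ξ f := by
        rw [heNormSq, ← tsum_mul_left]
        refine Summable.tsum_le_tsum_of_inj (fun k => k + p) haddinj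
          (fun m _ => by positivity) (fun k => le_refl _) hgsum (hfs.mul_left _)
      linarith
    have h0f : 0 ≤ heNormSq ξ f := tsum_nonneg fun j => by positivity
    have hsq := Real.sqrt_le_sqrt hfnormsq
    rw [show M ^ 2 * heNormSq ξ f = (M * Real.sqrt (heNormSq ξ f)) ^ 2 by
      rw [mul_pow, Real.sq_sqrt h0f]] at hsq
    rwa [Real.sqrt_sq (by positivity)] at hsq
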